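/- Let H and V be finite-dimensional complex inner product spaces, A : H → V a linear map, τ ∈ V a nonzero vector in the image of A, and w₀ := A⁺τ, assumed to have norm 1. Let T := ker A ⊕ span{w₀}, let K ⊆ H be a subspace, and write Π_S for the orthogonal projection onto a subspace S. Define e₋ := min{ ‖Π_K A*ω‖² : ω ∈ V, ⟨τ, ω⟩ = 1 } and w̃₋ := min{ ‖A*ω‖² : ω ∈ V, ⟨τ, ω⟩ = 1, ‖Π_K A*ω‖² = e₋ }. Then w̃₋ = 1 + ‖ (Π_{T⊥} Π_K Π_{T⊥})⁺ Π_{K⊥} w₀ ‖². -/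

import Mathlib

open scoped InnerProductSpace

open LinearMap

/-- The orthogonal projection onto a submodule, as an endomorphism of the ambient space. -/
noncomputable def projL {H : Type*} [NormedAddCommGroup H] [InnerProductSpace ℂ H]
    (K : Submodule ℂ H) [K.HasOrthogonalProjection] : H →ₗ[ℂ] H :=
  K.subtype ∘ₗ (K.orthogonalProjectionOnto).toLinearMap

/-- The four Moore–Penrose equations: `B` is the Moore–Penrose pseudoinverse of `A`. -/
def IsMPInv {H W : Type*} [NormedAddCommGroup H] [InnerProductSpace ℂ H]
    [FiniteDimensional ℂ H] [NormedAddCommGroup W] [InnerProductSpace ℂ W]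
    [FiniteDimensional ℂ W] (A : H →ₗ[ℂ] W) (B : W →ₗ[ℂ] H) : Prop :=
  A ∘ₗ B ∘ₗ A = A ∧ B ∘ₗ A ∘ₗ B = B ∧
    adjoint (A ∘ₗ B) = A ∘ₗ B ∧ adjoint (B ∘ₗ A) = B ∘ₗ A

section Aux

variable {H W : Type*} [NormedAddCommGroup H] [InnerProductSpace ℂ H] [FiniteDimensional ℂ H]
  [NormedAddCommGroup W] [InnerProductSpace ℂ W] [FiniteDimensional ℂ W]

lemma projL_mem (K : Submodule ℂ H) (x : H) : projL K x ∈ K := by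
  simp [projL]

lemma projL_eq_self (K : Submodule ℂ H) {x : H} (hx : x ∈ K) : projL K x = x := by
  exact (Submodule.starProjection_eq_self_iff (K := K)).2 hx

lemma projL_eq_zero (K : Submodule ℂ H) {x : H} (hx : x ∈ Kᗮ) : projL K x = 0 := by
  simp [projL, Submodule.orthogonalProjectionOnto_apply_of_mem_orthogonal hx]

lemma projL_symm (K : Submodule ℂ H) : (projL K).IsSymmetric := by
  exact Submodule.starProjection_isSymmetric K

lemma projL_adjoint (K : Submodule ℂ H) : adjoint (projL K) = projL K :=
  ((LinearMap.isSymmetric_iff_isSelfAdjoint _).1 (projL_symm K))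

lemma projL_idem (K : Submodule ℂ H) (x : H) : projL K (projL K x) = projL K x :=
  projL_eq_self K (projL_mem K x)

lemma projL_orth (K : Submodule ℂ H) (x : H) : projL Kᗮ x = x - projL K x := by
  exact Submodule.starProjection_orthogonal_val (K := K) x

lemma my_ker_adjoint (N : H →ₗ[ℂ] W) : ker (adjoint N) = (range N)ᗮ := by
  ext x
  simp only [mem_ker, Submodule.mem_orthogonal]
  constructor
  · rintro h u ⟨y, rfl⟩
    rw [← adjoint_inner_right, h, inner_zero_right]
  · intro h
    have := h (N (adjoint N x)) ⟨_, rfl⟩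
    rw [← adjoint_inner_right, inner_self_eq_zero] at this
    exact this

lemma my_range_adjoint (N : H →ₗ[ℂ] W) : range (adjoint N) = (ker N)ᗮ := by
  have := my_ker_adjoint (adjoint N)
  rw [adjoint_adjoint] at this
  rw [← (range (adjoint N)).orthogonal_orthogonal, ← this]

lemma range_selfadjoint {M : H →ₗ[ℂ] H} (h : adjoint M = M) : range M = (ker M)ᗮ := by
  conv_lhs => rw [← h]
  exact my_range_adjoint M

lemma my_range_comp_adjoint (N : H →ₗ[ℂ] H) : range (N ∘ₗ adjoint N) = range N := by
  have hker : ker (N ∘ₗ adjoint N) = ker (adjoint N) := by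
    ext x
    simp only [mem_ker, comp_apply]
    constructor
    · intro h
      have : ⟪adjoint N x, adjoint N x⟫_ℂ = 0 := by
        rw [← adjoint_inner_right, adjoint_adjoint, h, inner_zero_right]
      exact inner_self_eq_zero.1 this
    · intro h; rw [h, map_zero]
  have hsa : adjoint (N ∘ₗ adjoint N) = N ∘ₗ adjoint N := by
    rw [adjoint_comp, adjoint_adjoint]
  rw [range_selfadjoint hsa, hker, my_ker_adjoint, Submodule.orthogonal_orthogonal]

/-- For an MP-inverse `B` of a self-adjoint `M`: `ker M ⊆ ker B`. -/
lemma mp_kerB {M B : H →ₗ[ℂ] H} (hB : IsMPInv M B) (hM : adjoint M = M)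
    {z : H} (hz : M z = 0) : B z = 0 := by
  have h1 : M ∘ₗ B = adjoint B ∘ₗ M := by
    rw [← hB.2.2.1, adjoint_comp, hM]
  have h1' : M (B z) = adjoint B (M z) := congrFun (congrArg DFunLike.coe h1) z
  have h2' : B (M (B z)) = B z := by
    have := congrFun (congrArg DFunLike.coe hB.2.1) z
    simpa using this
  rw [← h2', h1', hz, map_zero, map_zero]

/-- For an MP-inverse `B` of a self-adjoint `M`: `range B ⊆ range M`. -/
lemma mp_rangeB {M B : H →ₗ[ℂ] H} (hB : IsMPInv M B) (hM : adjoint M = M)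
    (x : H) : B x ∈ range M := by
  have h1 : B ∘ₗ M = M ∘ₗ adjoint B := by
    rw [← hB.2.2.2, adjoint_comp, hM]
  have h1' : B (M (B x)) = M (adjoint B (B x)) := congrFun (congrArg DFunLike.coe h1) (B x)
  have h2' : B (M (B x)) = B x := by
    have := congrFun (congrArg DFunLike.coe hB.2.1) x
    simpa using this
  exact ⟨_, (h2'.symm.trans h1').symm⟩

lemma mp_MB_range {M B : H →ₗ[ℂ] H} (hB : IsMPInv M B)
    {y : H} (hy : y ∈ range M) : M (B y) = y := by
  obtain ⟨u, rfl⟩ := hy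
  have := congrFun (congrArg DFunLike.coe hB.1) u
  simpa using this

lemma norm_add_sq' (x y : H) (h : ⟪x, y⟫_ℂ = 0) : ‖x + y‖ ^ 2 = ‖x‖ ^ 2 + ‖y‖ ^ 2 := by
  have := norm_add_sq_eq_norm_sq_add_norm_sq_of_inner_eq_zero x y h
  simpa [pow_two] using this

end Aux

/-- The optimal min-error negative witness size can be expressed via pseudoinverses:
`w̃₋ = 1 + ‖(Π_{T⊥} Π_K Π_{T⊥})⁺ Π_{K⊥} w₀‖²`. -/
theorem stmt14 {H W : Type*}
    [NormedAddCommGroup H] [InnerProductSpace ℂ H] [FiniteDimensional ℂ H]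
    [NormedAddCommGroup W] [InnerProductSpace ℂ W] [FiniteDimensional ℂ W]
    (A : H →ₗ[ℂ] W) (τ : W) (hτ : τ ≠ 0) (hτA : τ ∈ range A)
    (Ainv : W →ₗ[ℂ] H) (hAinv : IsMPInv A Ainv)
    (w₀ : H) (hw₀ : w₀ = Ainv τ) (hw₀n : ‖w₀‖ = 1)
    (K : Submodule ℂ H)
    (T : Submodule ℂ H) (hT : T = ker A ⊔ Submodule.span ℂ {w₀})
    (B : H →ₗ[ℂ] H) (hB : IsMPInv (projL Tᗮ ∘ₗ projL K ∘ₗ projL Tᗮ) B)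
    (eneg : ℝ)
    (heneg : eneg = sInf {r : ℝ | ∃ ω : W, ⟪τ, ω⟫_ℂ = 1 ∧
        r = ‖projL K (adjoint A ω)‖ ^ 2})
    (wneg : ℝ)
    (hwneg : wneg = sInf {r : ℝ | ∃ ω : W, ⟪τ, ω⟫_ℂ = 1 ∧
        ‖projL K (adjoint A ω)‖ ^ 2 = eneg ∧ r = ‖adjoint A ω‖ ^ 2}) :
    wneg = 1 + ‖B (projL Kᗮ w₀)‖ ^ 2 := by
  set P : H →ₗ[ℂ] H := projL K with hP
  set Q : H →ₗ[ℂ] H := projL Tᗮ with hQ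
  set M : H →ₗ[ℂ] H := projL Tᗮ ∘ₗ projL K ∘ₗ projL Tᗮ with hM
  set v₀ : H := B (projL Kᗮ w₀) with hv₀
  -- basic facts about A, w₀
  have hAw₀ : A w₀ = τ := by
    obtain ⟨x, hx⟩ := hτA
    have := congrFun (congrArg DFunLike.coe hAinv.1) x
    simp only [comp_apply] at this
    rw [hw₀, ← hx, this]
  have hw₀r : w₀ ∈ range (adjoint A) := by
    refine ⟨adjoint Ainv w₀, ?_⟩
    have : adjoint A (adjoint Ainv w₀) = adjoint (Ainv ∘ₗ A) w₀ := by
      rw [adjoint_comp]; rfl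
    rw [this, hAinv.2.2.2, comp_apply, hAw₀, ← hw₀]
  have hkerA : (ker A)ᗮ = range (adjoint A) := (my_range_adjoint A).symm
  have hw₀T : w₀ ∈ T := by
    rw [hT]
    exact Submodule.mem_sup_right (Submodule.mem_span_singleton_self w₀)
  have hw₀w₀ : ⟪w₀, w₀⟫_ℂ = 1 := by
    rw [inner_self_eq_norm_sq_to_K, hw₀n]; norm_num
  have hτω : ∀ ω : W, ⟪τ, ω⟫_ℂ = ⟪w₀, adjoint A ω⟫_ℂ := fun ω => by
    rw [adjoint_inner_right, hAw₀]
  have hTorth : Tᗮ = (ker A)ᗮ ⊓ (Submodule.span ℂ {w₀})ᗮ := by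
    rw [hT, Submodule.inf_orthogonal]
  -- the feasible set of adjoint A ω with ⟪τ, ω⟫ = 1 is w₀ + Tᗮ
  have hset : ∀ u : H, (∃ ω : W, ⟪τ, ω⟫_ℂ = 1 ∧ adjoint A ω = u) ↔
      ∃ v ∈ Tᗮ, u = w₀ + v := by
    intro u
    constructor
    · rintro ⟨ω, hω1, rfl⟩
      refine ⟨adjoint A ω - w₀, ?_, by abel⟩
      rw [hTorth, Submodule.mem_inf]
      constructor
      · rw [hkerA]
        exact Submodule.sub_mem _ ⟨ω, rfl⟩ hw₀r
      · rw [Submodule.mem_orthogonal]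
        intro y hy
        obtain ⟨c, rfl⟩ := Submodule.mem_span_singleton.1 hy
        rw [inner_smul_left, inner_sub_right, hw₀w₀, ← hτω, hω1, sub_self, mul_zero]
    · rintro ⟨v, hv, rfl⟩
      have hvr : v ∈ range (adjoint A) := by
        rw [← hkerA]
        rw [hTorth, Submodule.mem_inf] at hv
        exact hv.1
      obtain ⟨ω, hω⟩ : w₀ + v ∈ range (adjoint A) := Submodule.add_mem _ hw₀r hvr
      refine ⟨ω, ?_, hω⟩
      rw [hτω, hω, inner_add_right, hw₀w₀]
      have : ⟪w₀, v⟫_ℂ = 0 := hv w₀ hw₀T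
      rw [this, add_zero]
  -- properties of M and v₀
  have hMsa : adjoint M = M := by
    rw [hM, adjoint_comp, adjoint_comp, projL_adjoint, projL_adjoint]
    ext x; simp [comp_apply]
  have hQw₀ : Q w₀ = 0 :=
    projL_eq_zero _ (by rw [Submodule.orthogonal_orthogonal]; exact hw₀T)
  have hQmem : ∀ x : H, Q x ∈ Tᗮ := fun x => projL_mem _ x
  have hQself : ∀ x ∈ Tᗮ, Q x = x := fun x hx => projL_eq_self _ hx
  have hMrange : range M = range (Q ∘ₗ P) := by
    have hMeq : M = (Q ∘ₗ P) ∘ₗ adjoint (Q ∘ₗ P) := by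
      rw [adjoint_comp, projL_adjoint, projL_adjoint]
      ext x
      simp only [hM, comp_apply, hP, hQ]
      rw [projL_idem]
    rw [hMeq, my_range_comp_adjoint]
  -- B kills everything killed by Q
  have hBQ : ∀ z : H, B z = B (Q z) := by
    intro z
    have hker : M (z - Q z) = 0 := by
      simp only [hM, comp_apply, map_sub]
      rw [show projL Tᗮ (projL Tᗮ z) = projL Tᗮ z from projL_idem _ z]
      simp
    have := mp_kerB hB hMsa hker
    rw [map_sub] at this
    exact sub_eq_zero.1 this
  -- v₀ lies in range M and in Tᗮ
  have hv₀r : v₀ ∈ range M := mp_rangeB hB hMsa _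
  have hv₀T : v₀ ∈ Tᗮ := by
    obtain ⟨y, hy⟩ := hv₀r
    rw [← hy, hM]
    exact projL_mem Tᗮ ((projL K ∘ₗ projL Tᗮ) y)
  have hQKw : Q (projL Kᗮ w₀) ∈ range M := by
    rw [hMrange]
    refine ⟨-w₀, ?_⟩
    rw [projL_orth K w₀, map_sub, hQw₀]
    simp [comp_apply]
    rfl
  have hMv₀ : M v₀ = Q (projL Kᗮ w₀) := by
    have h1 : v₀ = B (Q (projL Kᗮ w₀)) := by rw [hv₀]; exact hBQ _
    rw [h1]
    exact mp_MB_range hB hQKw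
  have hQPv₀ : Q (P v₀) = Q (projL Kᗮ w₀) := by
    have := hMv₀
    rw [hM] at this
    simp only [comp_apply] at this
    rwa [hQself _ hv₀T] at this
  have hQPv : Q (P (w₀ + v₀)) = 0 := by
    rw [map_add, map_add, hQPv₀, projL_orth K w₀, map_sub, hQw₀]
    abel
  -- key quadratic identity
  have hkey : ∀ v ∈ Tᗮ, ‖P (w₀ + v)‖ ^ 2
      = ‖P (w₀ + v₀)‖ ^ 2 + ‖P (v - v₀)‖ ^ 2 := by
    intro v hv
    have hsplit : P (w₀ + v) = P (w₀ + v₀) + P (v - v₀) := by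
      rw [← map_add]; congr 1; abel
    have hinner : ⟪P (w₀ + v₀), P (v - v₀)⟫_ℂ = 0 := by
      have hb : v - v₀ ∈ Tᗮ := Submodule.sub_mem _ hv hv₀T
      calc ⟪P (w₀ + v₀), P (v - v₀)⟫_ℂ
          = ⟪P (P (w₀ + v₀)), v - v₀⟫_ℂ := (projL_symm K (P (w₀ + v₀)) (v - v₀)).symm
        _ = ⟪P (w₀ + v₀), v - v₀⟫_ℂ := by rw [projL_idem]
        _ = ⟪P (w₀ + v₀), Q (v - v₀)⟫_ℂ := by rw [hQself _ hb]
        _ = ⟪Q (P (w₀ + v₀)), v - v₀⟫_ℂ := (projL_symm Tᗮ (P (w₀ + v₀)) (v - v₀)).symm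
        _ = 0 := by rw [hQPv, inner_zero_left]
    rw [hsplit]
    exact norm_add_sq' _ _ hinner
  have hone : ∀ v ∈ Tᗮ, ‖w₀ + v‖ ^ 2 = 1 + ‖v‖ ^ 2 := by
    intro v hv
    have h0 : ⟪w₀, v⟫_ℂ = 0 := Submodule.inner_right_of_mem_orthogonal hw₀T hv
    rw [norm_add_sq' _ _ h0, hw₀n]
    norm_num
  -- value of eneg
  have hS₁ : eneg = ‖P (w₀ + v₀)‖ ^ 2 := by
    rw [heneg]
    apply IsLeast.csInf_eq
    constructor
    · obtain ⟨ω, hω1, hω2⟩ := (hset (w₀ + v₀)).2 ⟨v₀, hv₀T, rfl⟩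
      exact ⟨ω, hω1, by rw [hω2]⟩
    · rintro r ⟨ω, hω1, rfl⟩
      obtain ⟨v, hv, hu⟩ := (hset (adjoint A ω)).1 ⟨ω, hω1, rfl⟩
      rw [hu, hkey v hv]
      have := sq_nonneg ‖P (v - v₀)‖
      linarith
  -- value of wneg
  have hS₂ : wneg = 1 + ‖v₀‖ ^ 2 := by
    rw [hwneg]
    apply IsLeast.csInf_eq
    constructor
    · obtain ⟨ω, hω1, hω2⟩ := (hset (w₀ + v₀)).2 ⟨v₀, hv₀T, rfl⟩
      refine ⟨ω, hω1, ?_, ?_⟩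
      · rw [hω2, ← hS₁]
      · rw [hω2, hone v₀ hv₀T]
    · rintro r ⟨ω, hω1, hω2, rfl⟩
      obtain ⟨v, hv, hu⟩ := (hset (adjoint A ω)).1 ⟨ω, hω1, rfl⟩
      rw [hu] at hω2 ⊢
      rw [hone v hv]
      have h0 : ‖P (v - v₀)‖ ^ 2 = 0 := by
        have := hkey v hv
        rw [hω2, ← hS₁] at this
        linarith
      have hPv : P (v - v₀) = 0 := norm_eq_zero.1 (pow_eq_zero_iff two_ne_zero |>.1 h0)
      have hMv : M (v - v₀) = 0 := by
        rw [hM]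
        simp only [comp_apply]
        rw [hQself _ (Submodule.sub_mem _ hv hv₀T), hPv, map_zero]
      have hperp : ⟪v₀, v - v₀⟫_ℂ = 0 := by
        have h2 : v₀ ∈ (ker M)ᗮ := by
          rw [← range_selfadjoint hMsa]; exact hv₀r
        exact Submodule.inner_left_of_mem_orthogonal (show v - v₀ ∈ ker M from hMv) h2
      have hnv : ‖v‖ ^ 2 = ‖v₀‖ ^ 2 + ‖v - v₀‖ ^ 2 := by
        conv_lhs => rw [show v = v₀ + (v - v₀) by abel]
        exact norm_add_sq' _ _ hperp
      have := sq_nonneg ‖v - v₀‖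
      linarith
  rw [hS₂]
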